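/- A normalized 3-cocycle φ ∈ C^3_N(G,M) is symmetric if and only if φ(x, x^{-1}, y) = 0 and φ(x, y, y^{-1}) = 0 for all x, y ∈ G. -/
import Mathlib


/-- A normalized 3-cocycle `φ` is symmetric (invariant under the
`Σ₄`-action given by `τ₁, τ₂, τ₃`) iff `φ(x,x⁻¹,y) = 0` and `φ(x,y,y⁻¹) = 0`
for all `x, y ∈ G`. -/
theorem stmt2 {G : Type*} [Group G] {M : Type*} [AddCommGroup M]
    [DistribMulAction G M] (φ : G → G → G → M)
    -- normalized
    (hnorm : ∀ x y z : G, (x = 1 ∨ y = 1 ∨ z = 1) → φ x y z = 0)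
    -- cocycle
    (hcocycle : ∀ x y z w : G,
      x • φ y z w - φ (x * y) z w + φ x (y * z) w - φ x y (z * w) + φ x y z = 0) :
    ((∀ x y z : G, φ x y z = - (x • φ x⁻¹ (x * y) z))
      ∧ (∀ x y z : G, φ x y z = - φ (x * y) y⁻¹ (y * z))
      ∧ (∀ x y z : G, φ x y z = - φ x (y * z) z⁻¹))
    ↔ (∀ x y : G, φ x x⁻¹ y = 0 ∧ φ x y y⁻¹ = 0) := by
  constructor
  · rintro ⟨h1, _, h3⟩ x y
    constructor
    · have := h1 x x⁻¹ y
      rw [mul_inv_cancel, hnorm x⁻¹ 1 y (Or.inr (Or.inl rfl))] at this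
      simpa using this
    · have := h3 x y y⁻¹
      rw [mul_inv_cancel, hnorm x 1 y⁻¹⁻¹ (Or.inr (Or.inl rfl))] at this
      simpa using this
  · intro h
    refine ⟨fun x y z => ?_, fun x y z => ?_, fun x y z => ?_⟩
    · have hc := hcocycle x x⁻¹ (x * y) z
      rw [mul_inv_cancel, hnorm 1 (x * y) z (Or.inl rfl), inv_mul_cancel_left,
        (h x (x * y * z)).1, (h x (x * y)).1] at hc
      simp only [sub_zero, add_zero] at hc
      exact eq_neg_of_add_eq_zero_right hc
    · have hc := hcocycle x y y⁻¹ (y * z)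
      rw [mul_inv_cancel, (h y (y * z)).1, hnorm x 1 (y * z) (Or.inr (Or.inl rfl)),
        inv_mul_cancel_left, (h x y).2] at hc
      simp only [smul_zero, zero_sub, add_zero, zero_add] at hc
      exact (sub_eq_zero.mp hc).symm
    · have hc := hcocycle x y z z⁻¹
      rw [mul_inv_cancel, (h y z).2, (h (x * y) z).2,
        hnorm x y 1 (Or.inr (Or.inr rfl))] at hc
      simp only [smul_zero, zero_sub, neg_zero, zero_add, sub_zero] at hc
      exact (eq_neg_of_add_eq_zero_right hc)
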